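/- Let p ≥ 2 be a real number. There exists a constant C > 0 (depending only on p) such that for all ξ, η ∈ Matrix (Fin 3) (Fin 3) ℝ, |G_p(ξ) − G_p(η)| ≤ C(1 + ‖ξ‖ + ‖η‖)^{p−1}‖ξ − η‖, where G_p(ξ) := max(μ₁^{p/2} + μ₂^{p/2} + μ₃^{p/2} − 3, 0) and μ₁, μ₂, μ₃ are the (real) eigenvalues of the symmetric positive semidefinite matrix C̃(ξ) := (I₃ + ξ)ᵀ(I₃ + ξ). -/

import Mathlib

open Matrix Set
open scoped InnerProductSpace

set_option linter.unusedSectionVars false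

/-- The Frobenius norm of a real matrix: `‖ξ‖ = (tr(ξᵀξ))^(1/2)`. -/
noncomputable def frobNorm {M N : ℕ} (ξ : Matrix (Fin M) (Fin N) ℝ) : ℝ :=
  Real.sqrt ((ξᵀ * ξ).trace)

/-- The right Cauchy–Green tensor `C̃(ξ) = (I₃ + ξ)ᵀ(I₃ + ξ)`. -/
noncomputable def Ctil (ξ : Matrix (Fin 3) (Fin 3) ℝ) : Matrix (Fin 3) (Fin 3) ℝ :=
  (1 + ξ)ᵀ * (1 + ξ)

/-- `C̃(ξ)` is a symmetric (hermitian) real matrix. -/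
lemma Ctil_isHermitian (ξ : Matrix (Fin 3) (Fin 3) ℝ) : (Ctil ξ).IsHermitian := by
  have h := Matrix.isHermitian_conjTranspose_mul_self (1 + ξ)
  rwa [Matrix.conjTranspose_eq_transpose_of_trivial] at h

/-- The Ogden-type density `G_p(ξ) = max(μ₁^{p/2} + μ₂^{p/2} + μ₃^{p/2} − 3, 0)`,
where the `μᵢ` are the eigenvalues of `C̃(ξ)`. -/
noncomputable def Gp (p : ℝ) (ξ : Matrix (Fin 3) (Fin 3) ℝ) : ℝ :=
  max ((∑ i, (Ctil_isHermitian ξ).eigenvalues i ^ (p / 2)) - 3) 0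

section FrobBasic

variable {M N K : ℕ}

lemma frob_trace_eq (ξ : Matrix (Fin M) (Fin N) ℝ) :
    (ξᵀ * ξ).trace = ∑ i, ∑ j, ξ i j ^ 2 := by
  simp_rw [Matrix.trace, Matrix.diag, Matrix.mul_apply, Matrix.transpose_apply, sq]
  rw [Finset.sum_comm]

lemma frobNorm_eq (ξ : Matrix (Fin M) (Fin N) ℝ) :
    frobNorm ξ = Real.sqrt (∑ i, ∑ j, ξ i j ^ 2) := by
  rw [frobNorm, frob_trace_eq]

lemma frobNorm_nonneg (ξ : Matrix (Fin M) (Fin N) ℝ) : 0 ≤ frobNorm ξ :=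
  Real.sqrt_nonneg _

lemma frobNorm_transpose (ξ : Matrix (Fin M) (Fin N) ℝ) : frobNorm ξᵀ = frobNorm ξ := by
  rw [frobNorm_eq, frobNorm_eq, Finset.sum_comm]
  rfl

lemma frobNorm_neg (ξ : Matrix (Fin M) (Fin N) ℝ) : frobNorm (-ξ) = frobNorm ξ := by
  simp [frobNorm_eq]

lemma frobNorm_sub_rev (ξ η : Matrix (Fin M) (Fin N) ℝ) :
    frobNorm (ξ - η) = frobNorm (η - ξ) := by
  rw [← frobNorm_neg, neg_sub]

lemma frob_sq_le (ξ : Matrix (Fin M) (Fin N) ℝ) {c : ℝ} (hc : 0 ≤ c)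
    (h : ∑ i, ∑ j, ξ i j ^ 2 ≤ c ^ 2) : frobNorm ξ ≤ c := by
  rw [frobNorm_eq]
  calc Real.sqrt (∑ i, ∑ j, ξ i j ^ 2) ≤ Real.sqrt (c ^ 2) := Real.sqrt_le_sqrt h
    _ = c := Real.sqrt_sq hc

lemma sq_frobNorm (ξ : Matrix (Fin M) (Fin N) ℝ) :
    frobNorm ξ ^ 2 = ∑ i, ∑ j, ξ i j ^ 2 := by
  rw [frobNorm_eq, Real.sq_sqrt]
  positivity

lemma frobNorm_triangle (ξ η : Matrix (Fin M) (Fin N) ℝ) :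
    frobNorm (ξ + η) ≤ frobNorm ξ + frobNorm η := by
  refine frob_sq_le _ (add_nonneg (frobNorm_nonneg _) (frobNorm_nonneg _)) ?_
  have hcs : ∑ i, ∑ j, ξ i j * η i j ≤ frobNorm ξ * frobNorm η := by
    have h1 : ∑ p : Fin M × Fin N, ξ p.1 p.2 * η p.1 p.2 ≤
        Real.sqrt (∑ p : Fin M × Fin N, ξ p.1 p.2 ^ 2) *
        Real.sqrt (∑ p : Fin M × Fin N, η p.1 p.2 ^ 2) :=
      Real.sum_mul_le_sqrt_mul_sqrt _ _ _
    rw [Fintype.sum_prod_type, Fintype.sum_prod_type, Fintype.sum_prod_type] at h1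
    rwa [frobNorm_eq, frobNorm_eq]
  have hexp : ∑ i, ∑ j, (ξ + η) i j ^ 2 =
      (∑ i, ∑ j, ξ i j ^ 2) + 2 * (∑ i, ∑ j, ξ i j * η i j) + ∑ i, ∑ j, η i j ^ 2 := by
    simp_rw [Matrix.add_apply, add_sq, Finset.sum_add_distrib, Finset.mul_sum]
    ring
  rw [hexp, add_sq, ← sq_frobNorm ξ, ← sq_frobNorm η]
  nlinarith [hcs]

lemma frobNorm_mul_le (ξ : Matrix (Fin M) (Fin N) ℝ) (η : Matrix (Fin N) (Fin K) ℝ) :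
    frobNorm (ξ * η) ≤ frobNorm ξ * frobNorm η := by
  refine frob_sq_le _ (mul_nonneg (frobNorm_nonneg _) (frobNorm_nonneg _)) ?_
  rw [mul_pow, sq_frobNorm, sq_frobNorm]
  have key : ∀ (i : Fin M) (j : Fin K), (ξ * η) i j ^ 2 ≤
      (∑ k, ξ i k ^ 2) * (∑ k, η k j ^ 2) := by
    intro i j
    rw [Matrix.mul_apply]
    exact Finset.sum_mul_sq_le_sq_mul_sq _ _ _
  calc ∑ i, ∑ j, (ξ * η) i j ^ 2 ≤ ∑ i, ∑ j, (∑ k, ξ i k ^ 2) * (∑ k, η k j ^ 2) :=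
        Finset.sum_le_sum fun i _ => Finset.sum_le_sum fun j _ => key i j
    _ = (∑ i, ∑ k, ξ i k ^ 2) * (∑ k, ∑ j, η k j ^ 2) := by
        rw [Finset.sum_mul]
        refine Finset.sum_congr rfl fun i _ => ?_
        rw [← Finset.mul_sum, Finset.sum_comm]
    _ = _ := rfl

lemma frobNorm_one_le : frobNorm (1 : Matrix (Fin 3) (Fin 3) ℝ) ≤ 3 := by
  refine frob_sq_le _ (by norm_num) ?_
  have : ∀ i j : Fin 3, ((1 : Matrix (Fin 3) (Fin 3) ℝ) i j) ^ 2 =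
      if i = j then 1 else 0 := by
    intro i j
    by_cases h : i = j <;> simp [Matrix.one_apply, h]
  simp_rw [this]
  norm_num [Finset.sum_ite_eq]

/-- Rayleigh-type bound: `|v ⬝ᵥ (A *ᵥ v)| ≤ frobNorm A` for a unit vector `v`. -/
lemma abs_dot_mulVec_le (A : Matrix (Fin N) (Fin N) ℝ) (v : Fin N → ℝ)
    (hv : ∑ i, v i ^ 2 = 1) : |v ⬝ᵥ (A *ᵥ v)| ≤ frobNorm A := by
  have h1 : (v ⬝ᵥ (A *ᵥ v)) ^ 2 ≤ (∑ i, v i ^ 2) * (∑ i, (A *ᵥ v) i ^ 2) :=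
    Finset.sum_mul_sq_le_sq_mul_sq _ _ _
  have h2 : ∑ i, (A *ᵥ v) i ^ 2 ≤ ∑ i, ∑ j, A i j ^ 2 := by
    refine Finset.sum_le_sum fun i _ => ?_
    calc (A *ᵥ v) i ^ 2 ≤ (∑ j, A i j ^ 2) * (∑ j, v j ^ 2) := by
          rw [Matrix.mulVec, dotProduct]
          exact Finset.sum_mul_sq_le_sq_mul_sq _ _ _
      _ = ∑ j, A i j ^ 2 := by rw [hv, mul_one]
  have h3 : (v ⬝ᵥ (A *ᵥ v)) ^ 2 ≤ frobNorm A ^ 2 := by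
    rw [sq_frobNorm]
    calc (v ⬝ᵥ (A *ᵥ v)) ^ 2 ≤ (∑ i, v i ^ 2) * (∑ i, (A *ᵥ v) i ^ 2) := h1
      _ = ∑ i, (A *ᵥ v) i ^ 2 := by rw [hv, one_mul]
      _ ≤ _ := h2
  calc |v ⬝ᵥ (A *ᵥ v)| = Real.sqrt ((v ⬝ᵥ (A *ᵥ v)) ^ 2) := (Real.sqrt_sq_eq_abs _).symm
    _ ≤ Real.sqrt (frobNorm A ^ 2) := Real.sqrt_le_sqrt h3
    _ = frobNorm A := Real.sqrt_sq (frobNorm_nonneg _)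

end FrobBasic

/-- one-sided Lipschitz bound for rpow on `[0,R]` -/
lemma rpow_sub_rpow_le {s R x y : ℝ} (hs : 1 ≤ s) (hx : x ∈ Icc 0 R) (hy : y ∈ Icc 0 R) :
    x ^ s - y ^ s ≤ s * R ^ (s - 1) * |x - y| := by
  have hs0 : (0:ℝ) ≤ s := by linarith
  have hR0 : 0 ≤ R := le_trans hx.1 hx.2
  rcases le_or_gt x y with h | h
  · have h1 : x ^ s ≤ y ^ s := Real.rpow_le_rpow hx.1 h hs0
    have h2 : 0 ≤ s * R ^ (s - 1) * |x - y| :=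
      mul_nonneg (mul_nonneg hs0 (Real.rpow_nonneg hR0 _)) (abs_nonneg _)
    linarith
  · obtain ⟨c, hc, hslope⟩ := exists_hasDerivAt_eq_slope (fun t => t ^ s)
      (fun t => s * t ^ (s - 1)) h
      ((continuous_iff_continuousAt.mpr fun t =>
        Real.continuousAt_rpow_const t s (Or.inr hs0)).continuousOn)
      (fun z hz => Real.hasDerivAt_rpow_const
        (Or.inl (lt_of_le_of_lt hy.1 hz.1).ne'))
    have hcR : c ^ (s - 1) ≤ R ^ (s - 1) := by
      refine Real.rpow_le_rpow ?_ ?_ (by linarith)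
      · have := hy.1; have := hc.1; linarith
      · have := hc.2; have := hx.2; linarith
    rw [eq_div_iff (by intro h0; rw [sub_eq_zero] at h0; exact absurd h0 (ne_of_gt h))] at hslope
    rw [abs_of_pos (by linarith : (0:ℝ) < x - y), ← hslope]
    have hmul : s * c ^ (s - 1) ≤ s * R ^ (s - 1) := mul_le_mul_of_nonneg_left hcR hs0
    exact mul_le_mul_of_nonneg_right hmul (by linarith)
variable {n : Type*} [Fintype n] [DecidableEq n]

lemma inner_eq_dot (x y : EuclideanSpace ℝ n) : ⟪x, y⟫_ℝ = ⇑x ⬝ᵥ ⇑y := by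
  simp [PiLp.inner_apply, RCLike.inner_apply, dotProduct, mul_comm]

lemma symm_dot {B : Matrix n n ℝ} (hB : B.IsHermitian) (x y : n → ℝ) :
    x ⬝ᵥ (B *ᵥ y) = (B *ᵥ x) ⬝ᵥ y := by
  have hBt : Bᵀ = B := by
    rw [← Matrix.conjTranspose_eq_transpose_of_trivial]; exact hB
  rw [Matrix.dotProduct_mulVec, ← Matrix.mulVec_transpose, hBt]

/-- quadratic form in terms of eigenvalues -/
lemma qf_eq {B : Matrix n n ℝ} (hB : B.IsHermitian) (x : EuclideanSpace ℝ n) :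
    ⇑x ⬝ᵥ (B *ᵥ ⇑x) =
      ∑ j, hB.eigenvalues j * (⟪hB.eigenvectorBasis j, x⟫_ℝ) ^ 2 := by
  set b := hB.eigenvectorBasis with hb
  have hBx : ∀ j, ⟪b j, (WithLp.toLp 2 (B *ᵥ ⇑x : n → ℝ) : EuclideanSpace ℝ n)⟫_ℝ
      = hB.eigenvalues j * ⟪b j, x⟫_ℝ := by
    intro j
    rw [inner_eq_dot]
    show (⇑(b j) : n → ℝ) ⬝ᵥ (B *ᵥ ⇑x) = _
    rw [symm_dot hB, hB.mulVec_eigenvectorBasis, smul_dotProduct, inner_eq_dot]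
    rfl
  have key := b.sum_inner_mul_inner x (WithLp.toLp 2 (B *ᵥ ⇑x : n → ℝ) : EuclideanSpace ℝ n)
  calc ⇑x ⬝ᵥ (B *ᵥ ⇑x) = ⟪x, (WithLp.toLp 2 (B *ᵥ ⇑x : n → ℝ) : EuclideanSpace ℝ n)⟫_ℝ := (inner_eq_dot x (WithLp.toLp 2 (B *ᵥ ⇑x))).symm
    _ = ∑ j, ⟪x, b j⟫_ℝ * ⟪b j, (WithLp.toLp 2 (B *ᵥ ⇑x : n → ℝ) : EuclideanSpace ℝ n)⟫_ℝ := key.symm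
    _ = ∑ j, hB.eigenvalues j * (⟪b j, x⟫_ℝ) ^ 2 := by
        refine Finset.sum_congr rfl fun j _ => ?_
        rw [hBx j, real_inner_comm x (b j)]; ring

/-- Parseval-type fact: squares of coefficients sum to 1 -/
lemma sum_inner_sq (b : OrthonormalBasis n ℝ (EuclideanSpace ℝ n)) (x : EuclideanSpace ℝ n)
    (hx : ‖x‖ = 1) : ∑ j, (⟪b j, x⟫_ℝ) ^ 2 = 1 := by
  have := b.sum_inner_mul_inner x x
  rw [real_inner_self_eq_norm_sq, hx] at this
  simp only [one_pow] at this
  rw [← this]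
  refine Finset.sum_congr rfl fun j _ => ?_
  rw [real_inner_comm x (b j)]; ring

variable {n : Type*}

/-- Peierls inequality for `x ↦ x ^ s`, `s ≥ 1`. -/
lemma peierls [Fintype n] [DecidableEq n] {B : Matrix n n ℝ} (hB : B.PosSemidef)
    (u : OrthonormalBasis n ℝ (EuclideanSpace ℝ n)) {s : ℝ} (hs : 1 ≤ s) :
    ∑ i, (⇑(u i) ⬝ᵥ (B *ᵥ ⇑(u i))) ^ s ≤ ∑ j, hB.1.eigenvalues j ^ s := by
  set b := hB.1.eigenvectorBasis with hbdef
  set μ := hB.1.eigenvalues with hμdef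
  have step : ∀ i, (⇑(u i) ⬝ᵥ (B *ᵥ ⇑(u i))) ^ s ≤ ∑ j, (⟪b j, u i⟫_ℝ) ^ 2 * μ j ^ s := by
    intro i
    have hq : ⇑(u i) ⬝ᵥ (B *ᵥ ⇑(u i)) = ∑ j, (⟪b j, u i⟫_ℝ) ^ 2 • μ j := by
      rw [qf_eq hB.1 (u i)]
      exact Finset.sum_congr rfl fun j _ => by rw [smul_eq_mul]; ring
    have hj := (convexOn_rpow hs).map_sum_le (t := Finset.univ)
      (w := fun j => (⟪b j, u i⟫_ℝ) ^ 2) (p := μ) (fun j _ => sq_nonneg _)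
      (sum_inner_sq b (u i) (u.orthonormal.1 i)) (fun j _ => Set.mem_Ici.mpr (hB.eigenvalues_nonneg j))
    rw [hq]
    refine le_trans hj ?_
    exact le_of_eq (Finset.sum_congr rfl fun j _ => by rw [smul_eq_mul])
  calc ∑ i, (⇑(u i) ⬝ᵥ (B *ᵥ ⇑(u i))) ^ s
      ≤ ∑ i, ∑ j, (⟪b j, u i⟫_ℝ) ^ 2 * μ j ^ s := Finset.sum_le_sum fun i _ => step i
    _ = ∑ j, (∑ i, (⟪b j, u i⟫_ℝ) ^ 2) * μ j ^ s := by
        rw [Finset.sum_comm]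
        exact Finset.sum_congr rfl fun j _ => by rw [Finset.sum_mul]
    _ = ∑ j, μ j ^ s := by
        refine Finset.sum_congr rfl fun j _ => ?_
        have : ∑ i, (⟪b j, u i⟫_ℝ) ^ 2 = 1 := by
          rw [← sum_inner_sq u (b j) (b.orthonormal.1 j)]
          exact Finset.sum_congr rfl fun i _ => by rw [real_inner_comm]
        rw [this, one_mul]

lemma unit_sum_sq {N : ℕ} (u : OrthonormalBasis (Fin N) ℝ (EuclideanSpace ℝ (Fin N)))
    (i : Fin N) : ∑ k, (⇑(u i) : Fin N → ℝ) k ^ 2 = 1 := by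
  have h1 : ⟪u i, u i⟫_ℝ = 1 := by
    rw [real_inner_self_eq_norm_sq, u.orthonormal.1 i]; norm_num
  rw [inner_eq_dot] at h1
  simpa [dotProduct, sq] using h1

lemma unit_dot {N : ℕ} (u : OrthonormalBasis (Fin N) ℝ (EuclideanSpace ℝ (Fin N)))
    (i : Fin N) : (⇑(u i) : Fin N → ℝ) ⬝ᵥ ⇑(u i) = 1 := by
  have h1 : ⟪u i, u i⟫_ℝ = 1 := by
    rw [real_inner_self_eq_norm_sq, u.orthonormal.1 i]; norm_num
  rw [inner_eq_dot] at h1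
  exact h1

lemma key_onesided {A B : Matrix (Fin 3) (Fin 3) ℝ}
    (hA : A.PosSemidef) (hB : B.PosSemidef) {s R : ℝ} (hs : 1 ≤ s)
    (hRA : frobNorm A ≤ R) (hRB : frobNorm B ≤ R) :
    ∑ i, hA.1.eigenvalues i ^ s - ∑ i, hB.1.eigenvalues i ^ s ≤
      3 * (s * R ^ (s - 1)) * frobNorm (A - B) := by
  set u := hA.1.eigenvectorBasis with hu
  have hqA : ∀ i, (⇑(u i) : Fin 3 → ℝ) ⬝ᵥ (A *ᵥ ⇑(u i)) = hA.1.eigenvalues i := by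
    intro i
    rw [hA.1.mulVec_eigenvectorBasis, dotProduct_smul, smul_eq_mul,
      unit_dot u i, mul_one]
  have habs : ∀ i, |hA.1.eigenvalues i - (⇑(u i) : Fin 3 → ℝ) ⬝ᵥ (B *ᵥ ⇑(u i))| ≤
      frobNorm (A - B) := by
    intro i
    rw [← hqA i]
    have : (⇑(u i) : Fin 3 → ℝ) ⬝ᵥ (A *ᵥ ⇑(u i)) - (⇑(u i) : Fin 3 → ℝ) ⬝ᵥ (B *ᵥ ⇑(u i))
        = (⇑(u i) : Fin 3 → ℝ) ⬝ᵥ ((A - B) *ᵥ ⇑(u i)) := by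
      rw [Matrix.sub_mulVec, dotProduct_sub]
    rw [this]
    exact abs_dot_mulVec_le _ _ (unit_sum_sq u i)
  have hstep : ∀ i, hA.1.eigenvalues i ^ s - ((⇑(u i) : Fin 3 → ℝ) ⬝ᵥ (B *ᵥ ⇑(u i))) ^ s ≤
      s * R ^ (s - 1) * frobNorm (A - B) := by
    intro i
    have hmemA : hA.1.eigenvalues i ∈ Icc 0 R := by
      constructor
      · exact hA.eigenvalues_nonneg i
      · rw [← hqA i]
        exact le_trans (le_abs_self _) (le_trans (abs_dot_mulVec_le _ _ (unit_sum_sq u i)) hRA)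
    have hmemB : (⇑(u i) : Fin 3 → ℝ) ⬝ᵥ (B *ᵥ ⇑(u i)) ∈ Icc 0 R := by
      constructor
      · have := hB.dotProduct_mulVec_nonneg (⇑(u i))
        simpa using this
      · exact le_trans (le_abs_self _) (le_trans (abs_dot_mulVec_le _ _ (unit_sum_sq u i)) hRB)
    calc hA.1.eigenvalues i ^ s - ((⇑(u i) : Fin 3 → ℝ) ⬝ᵥ (B *ᵥ ⇑(u i))) ^ s
        ≤ s * R ^ (s - 1) * |hA.1.eigenvalues i - (⇑(u i) : Fin 3 → ℝ) ⬝ᵥ (B *ᵥ ⇑(u i))| :=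
          rpow_sub_rpow_le hs hmemA hmemB
      _ ≤ s * R ^ (s - 1) * frobNorm (A - B) := by
          refine mul_le_mul_of_nonneg_left (habs i) ?_
          have hR0 : 0 ≤ R := le_trans (frobNorm_nonneg A) hRA
          positivity
  have hpeierls := peierls hB u hs
  have hsum : ∑ i, hA.1.eigenvalues i ^ s - ∑ i, ((⇑(u i) : Fin 3 → ℝ) ⬝ᵥ (B *ᵥ ⇑(u i))) ^ s
      ≤ 3 * (s * R ^ (s - 1) * frobNorm (A - B)) := by
    rw [← Finset.sum_sub_distrib]
    calc ∑ i, (hA.1.eigenvalues i ^ s - ((⇑(u i) : Fin 3 → ℝ) ⬝ᵥ (B *ᵥ ⇑(u i))) ^ s)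
        ≤ ∑ _i : Fin 3, s * R ^ (s - 1) * frobNorm (A - B) :=
          Finset.sum_le_sum fun i _ => hstep i
      _ = 3 * (s * R ^ (s - 1) * frobNorm (A - B)) := by
          rw [Finset.sum_const]
          simp [Finset.card_univ]
  calc ∑ i, hA.1.eigenvalues i ^ s - ∑ i, hB.1.eigenvalues i ^ s
      ≤ ∑ i, hA.1.eigenvalues i ^ s - ∑ i, ((⇑(u i) : Fin 3 → ℝ) ⬝ᵥ (B *ᵥ ⇑(u i))) ^ s := by
        linarith [hpeierls]
    _ ≤ 3 * (s * R ^ (s - 1) * frobNorm (A - B)) := hsum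
    _ = 3 * (s * R ^ (s - 1)) * frobNorm (A - B) := by ring

lemma Ctil_posSemidef (ξ : Matrix (Fin 3) (Fin 3) ℝ) : (Ctil ξ).PosSemidef := by
  have h := Matrix.posSemidef_conjTranspose_mul_self (1 + ξ)
  rwa [Matrix.conjTranspose_eq_transpose_of_trivial] at h

/-- The local Lipschitz estimate for the Ogden-type density established in the
proof of Example 3. -/
theorem ogden_local_lipschitz (p : ℝ) (hp : 2 ≤ p) :
    ∃ C : ℝ, 0 < C ∧ ∀ ξ η : Matrix (Fin 3) (Fin 3) ℝ,
      |Gp p ξ - Gp p η| ≤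
        C * (1 + frobNorm ξ + frobNorm η) ^ (p - 1) * frobNorm (ξ - η) := by
  have hs : 1 ≤ p / 2 := by linarith
  have hs0 : 0 < p / 2 := by linarith
  refine ⟨6 * (p / 2) * 3 ^ (p - 1), by positivity, ?_⟩
  intro ξ η
  have hA := Ctil_posSemidef ξ
  have hB := Ctil_posSemidef η
  set D := 1 + frobNorm ξ + frobNorm η with hDdef
  have hnξ := frobNorm_nonneg ξ
  have hnη := frobNorm_nonneg η
  have hD1 : 1 ≤ D := by simp only [hDdef]; linarith
  have hD0 : 0 < D := by linarith
  have h1ξ : frobNorm (1 + ξ) ≤ 3 * D := by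
    calc frobNorm (1 + ξ) ≤ frobNorm 1 + frobNorm ξ := frobNorm_triangle _ _
      _ ≤ 3 + frobNorm ξ := by linarith [frobNorm_one_le]
      _ ≤ 3 * D := by simp only [hDdef]; linarith
  have h1η : frobNorm (1 + η) ≤ 3 * D := by
    calc frobNorm (1 + η) ≤ frobNorm 1 + frobNorm η := frobNorm_triangle _ _
      _ ≤ 3 + frobNorm η := by linarith [frobNorm_one_le]
      _ ≤ 3 * D := by simp only [hDdef]; linarith
  have hsq : ∀ ζ : Matrix (Fin 3) (Fin 3) ℝ, frobNorm (1 + ζ) ≤ 3 * D →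
      frobNorm (Ctil ζ) ≤ (3 * D) ^ 2 := by
    intro ζ hζ
    calc frobNorm (Ctil ζ) ≤ frobNorm (1 + ζ)ᵀ * frobNorm (1 + ζ) := frobNorm_mul_le _ _
      _ = frobNorm (1 + ζ) * frobNorm (1 + ζ) := by rw [frobNorm_transpose]
      _ ≤ (3 * D) * (3 * D) :=
          mul_le_mul hζ hζ (frobNorm_nonneg _) (by positivity)
      _ = (3 * D) ^ 2 := (sq (3 * D)).symm
  have hfA : frobNorm (Ctil ξ) ≤ (3 * D) ^ 2 := hsq ξ h1ξ
  have hfB : frobNorm (Ctil η) ≤ (3 * D) ^ 2 := hsq η h1η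
  have hABid : Ctil ξ - Ctil η = (1 + ξ)ᵀ * (ξ - η) + (ξ - η)ᵀ * (1 + η) := by
    simp only [Ctil, Matrix.transpose_add, Matrix.transpose_one, Matrix.transpose_sub]
    noncomm_ring
  have hf0 := frobNorm_nonneg (ξ - η)
  have hAB : frobNorm (Ctil ξ - Ctil η) ≤ 6 * D * frobNorm (ξ - η) := by
    rw [hABid]
    calc frobNorm ((1 + ξ)ᵀ * (ξ - η) + (ξ - η)ᵀ * (1 + η))
        ≤ frobNorm ((1 + ξ)ᵀ * (ξ - η)) + frobNorm ((ξ - η)ᵀ * (1 + η)) :=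
          frobNorm_triangle _ _
      _ ≤ frobNorm (1 + ξ)ᵀ * frobNorm (ξ - η) + frobNorm (ξ - η)ᵀ * frobNorm (1 + η) :=
          add_le_add (frobNorm_mul_le _ _) (frobNorm_mul_le _ _)
      _ = frobNorm (1 + ξ) * frobNorm (ξ - η) + frobNorm (ξ - η) * frobNorm (1 + η) := by
          rw [frobNorm_transpose, frobNorm_transpose]
      _ ≤ (3 * D) * frobNorm (ξ - η) + frobNorm (ξ - η) * (3 * D) :=
          add_le_add (mul_le_mul_of_nonneg_right h1ξ hf0)
            (mul_le_mul_of_nonneg_left h1η hf0)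
      _ = 6 * D * frobNorm (ξ - η) := by ring
  -- reduce Gp to the eigenvalue sums
  have e1 : Gp p ξ = max ((∑ i, hA.1.eigenvalues i ^ (p / 2)) - 3) 0 := rfl
  have e2 : Gp p η = max ((∑ i, hB.1.eigenvalues i ^ (p / 2)) - 3) 0 := rfl
  have hGp : |Gp p ξ - Gp p η| ≤
      |(∑ i, hA.1.eigenvalues i ^ (p / 2)) - ∑ i, hB.1.eigenvalues i ^ (p / 2)| := by
    rw [e1, e2]
    calc |max ((∑ i, hA.1.eigenvalues i ^ (p / 2)) - 3) 0 -
          max ((∑ i, hB.1.eigenvalues i ^ (p / 2)) - 3) 0|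
        ≤ |((∑ i, hA.1.eigenvalues i ^ (p / 2)) - 3) -
            ((∑ i, hB.1.eigenvalues i ^ (p / 2)) - 3)| := abs_max_sub_max_le_abs _ _ _
      _ = _ := by rw [sub_sub_sub_cancel_right]
  have habsF : |(∑ i, hA.1.eigenvalues i ^ (p / 2)) - ∑ i, hB.1.eigenvalues i ^ (p / 2)| ≤
      3 * ((p / 2) * ((3 * D) ^ 2) ^ (p / 2 - 1)) * frobNorm (Ctil ξ - Ctil η) := by
    rw [abs_sub_le_iff]
    constructor
    · exact key_onesided hA hB hs hfA hfB
    · have h := key_onesided hB hA hs hfB hfA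
      rwa [frobNorm_sub_rev] at h
  -- rpow algebra
  have hrw : (((3 * D) ^ 2 : ℝ)) ^ (p / 2 - 1) = 3 ^ (p - 2) * D ^ (p - 2) := by
    rw [← Real.rpow_natCast (3 * D) 2, ← Real.rpow_mul (by positivity)]
    have : ((2 : ℕ) : ℝ) * (p / 2 - 1) = p - 2 := by push_cast; ring
    rw [this, Real.mul_rpow (by norm_num) (le_of_lt hD0)]
  have e3 : (3 : ℝ) ^ (p - 1) = 3 ^ (p - 2) * 3 := by
    rw [← Real.rpow_add_one (by norm_num : (3:ℝ) ≠ 0) (p - 2)]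
    congr 1; ring
  have e4 : D ^ (p - 1) = D ^ (p - 2) * D := by
    rw [← Real.rpow_add_one (ne_of_gt hD0) (p - 2)]
    congr 1; ring
  have h3p : (0:ℝ) < 3 ^ (p - 2) := Real.rpow_pos_of_pos (by norm_num) _
  have hDp : (0:ℝ) < D ^ (p - 2) := Real.rpow_pos_of_pos hD0 _
  calc |Gp p ξ - Gp p η|
      ≤ |(∑ i, hA.1.eigenvalues i ^ (p / 2)) - ∑ i, hB.1.eigenvalues i ^ (p / 2)| := hGp
    _ ≤ 3 * ((p / 2) * ((3 * D) ^ 2) ^ (p / 2 - 1)) * frobNorm (Ctil ξ - Ctil η) := habsF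
    _ = 3 * (p / 2) * (3 ^ (p - 2) * D ^ (p - 2)) * frobNorm (Ctil ξ - Ctil η) := by
        rw [hrw]; ring
    _ ≤ 3 * (p / 2) * (3 ^ (p - 2) * D ^ (p - 2)) * (6 * D * frobNorm (ξ - η)) := by
        refine mul_le_mul_of_nonneg_left hAB ?_
        positivity
    _ = 6 * (p / 2) * 3 ^ (p - 1) * D ^ (p - 1) * frobNorm (ξ - η) := by
        rw [e3, e4]; ring
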